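/- Let μ be a finite positive measure on ℝ such that all moments of e^{-t x^2} dμ(x) exist and are differentiable in t, let (p_n(·;t)) be the orthonormal polynomials for dσ_t(x) = e^{-t x^2} dμ(x) with positive leading coefficients γ_n(t), and suppose μ is even so the recurrence coefficients b_n vanish. Then d/dt (1/γ_n(t)^2) = -(a_n(t)^2 + a_{n+1}(t)^2) / γ_n(t)^2, where a_n are the recurrence coefficients in a_{n+1} p_{n+1} = x p_n - a_n p_{n-1}. -/

import Mathlib

open MeasureTheory Polynomial

/-- For orthonormal polynomials of the even measure `e^{-t x²} dμ(x)` with positive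
leading coefficients `γ_n(t)` and recurrence `a_{n+1} p_{n+1} = x p_n - a_n p_{n-1}`,
one has `d/dt (1/γ_n²) = -(a_n² + a_{n+1}²)/γ_n²`. -/
theorem deriv_inv_gamma_sq (μ : Measure ℝ) [IsFiniteMeasure μ]
    (P : ℕ → ℝ → Polynomial ℝ) (γ a : ℕ → ℝ → ℝ) (n : ℕ) (hn : 1 ≤ n)
    (heven : μ.map (fun x => -x) = μ)
    (hint : ∀ (k : ℕ) (t : ℝ), Integrable (fun x => x ^ k * Real.exp (-t * x ^ 2)) μ)
    (hmom : ∀ (k : ℕ) (t : ℝ),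
      HasDerivAt (fun s => ∫ x, x ^ k * Real.exp (-s * x ^ 2) ∂μ)
        (-∫ x, x ^ (k + 2) * Real.exp (-t * x ^ 2) ∂μ) t)
    (hdeg : ∀ k t, (P k t).natDegree = k)
    (hlead : ∀ k t, (P k t).leadingCoeff = γ k t)
    (hγpos : ∀ k t, 0 < γ k t)
    (hγdiff : ∀ k, Differentiable ℝ (γ k))
    (hcoeff : ∀ k i, Differentiable ℝ (fun t => (P k t).coeff i))
    (horth : ∀ k m t,
      ∫ x, (P k t).eval x * (P m t).eval x * Real.exp (-t * x ^ 2) ∂μ =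
        if k = m then 1 else 0)
    (ha0 : ∀ t, a 0 t = 0)
    (hrec : ∀ (k : ℕ) (t x : ℝ),
      a (k + 1) t * (P (k + 1) t).eval x =
        x * (P k t).eval x - a k t * (P (k - 1) t).eval x) :
    ∀ t, deriv (fun s => 1 / (γ n s) ^ 2) t =
      -(((a n t) ^ 2 + (a (n + 1) t) ^ 2) / (γ n t) ^ 2) := by
  -- Integrability of a polynomial times the weight
  have hintq : ∀ (q : Polynomial ℝ) (s : ℝ),
      Integrable (fun x => q.eval x * Real.exp (-s * x ^ 2)) μ := by
    intro q s
    have h1 : (fun x => q.eval x * Real.exp (-s * x ^ 2)) =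
        fun x => ∑ k ∈ Finset.range (q.natDegree + 1),
          q.coeff k * (x ^ k * Real.exp (-s * x ^ 2)) := by
      funext x
      rw [Polynomial.eval_eq_sum_range, Finset.sum_mul]
      simp [mul_assoc]
    rw [h1]
    exact integrable_finset_sum _ fun k _ => (hint k s).const_mul _
  have hint2 : ∀ (q₁ q₂ : Polynomial ℝ) (s : ℝ),
      Integrable (fun x => q₁.eval x * q₂.eval x * Real.exp (-s * x ^ 2)) μ := by
    intro q₁ q₂ s
    simpa [Polynomial.eval_mul] using hintq (q₁ * q₂) s
  -- Expansion of the integral of a polynomial times the weight into moments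
  have hexp : ∀ (q : Polynomial ℝ) (N : ℕ) (s : ℝ), q.natDegree < N →
      ∫ x, q.eval x * Real.exp (-s * x ^ 2) ∂μ =
        ∑ k ∈ Finset.range N, q.coeff k * ∫ x, x ^ k * Real.exp (-s * x ^ 2) ∂μ := by
    intro q N s hN
    have h1 : (fun x => q.eval x * Real.exp (-s * x ^ 2)) =
        fun x => ∑ k ∈ Finset.range N, q.coeff k * (x ^ k * Real.exp (-s * x ^ 2)) := by
      funext x
      rw [Polynomial.eval_eq_sum_range' hN, Finset.sum_mul]
      simp [mul_assoc]
    rw [h1, integral_finset_sum _ fun k _ => (hint k s).const_mul _]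
    simp [integral_const_mul]
  -- Orthogonality of P n to all polynomials of degree < n
  have horthlow : ∀ (s : ℝ) (d : ℕ), d < n → ∀ r : Polynomial ℝ, r.natDegree ≤ d →
      ∫ x, (P n s).eval x * r.eval x * Real.exp (-s * x ^ 2) ∂μ = 0 := by
    intro s d
    induction d with
    | zero =>
      intro hd r hr
      have hr0 : r = Polynomial.C (r.coeff 0) := Polynomial.eq_C_of_natDegree_le_zero hr
      have hP0 : P 0 s = Polynomial.C (γ 0 s) := by
        have h1 : (P 0 s).natDegree = 0 := hdeg 0 s
        have h2 := Polynomial.eq_C_of_natDegree_le_zero h1.le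
        rw [h2]
        congr 1
        have := hlead 0 s
        rwa [Polynomial.leadingCoeff, h1] at this
      have hγ0 : γ 0 s ≠ 0 := (hγpos 0 s).ne'
      have key : ∀ x : ℝ, (P n s).eval x * r.eval x * Real.exp (-s * x ^ 2) =
          (r.coeff 0 / γ 0 s) *
            ((P n s).eval x * (P 0 s).eval x * Real.exp (-s * x ^ 2)) := by
        intro x
        rw [hP0]
        conv_lhs => rw [hr0]
        simp only [Polynomial.eval_C]
        field_simp
      simp_rw [key]
      rw [integral_const_mul, horth n 0 s, if_neg (by omega)]
      ring
    | succ d ih =>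
      intro hd r hr
      set c := r.coeff (d + 1) / γ (d + 1) s with hc
      set r' := r - Polynomial.C c * P (d + 1) s with hr'
      have hPc : (P (d + 1) s).coeff (d + 1) = γ (d + 1) s := by
        have := hlead (d + 1) s
        rwa [Polynomial.leadingCoeff, hdeg] at this
      have hγd : γ (d + 1) s ≠ 0 := (hγpos (d + 1) s).ne'
      have hcoe : ∀ m, d < m → r'.coeff m = 0 := by
        intro m hm
        rcases eq_or_lt_of_le (Nat.succ_le_of_lt hm) with h | h
        · simp only [hr', Polynomial.coeff_sub, Polynomial.coeff_C_mul, ← h, hPc, hc]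
          field_simp
          ring
        · have h1 : r.coeff m = 0 :=
            Polynomial.coeff_eq_zero_of_natDegree_lt (lt_of_le_of_lt hr h)
          have h2 : (P (d + 1) s).coeff m = 0 :=
            Polynomial.coeff_eq_zero_of_natDegree_lt (by rw [hdeg]; exact h)
          simp [hr', h1, h2]
      have hr'deg : r'.natDegree ≤ d := Polynomial.natDegree_le_iff_coeff_eq_zero.mpr hcoe
      have key : ∀ x : ℝ, (P n s).eval x * r.eval x * Real.exp (-s * x ^ 2) =
          (P n s).eval x * r'.eval x * Real.exp (-s * x ^ 2) +
            c * ((P n s).eval x * (P (d + 1) s).eval x * Real.exp (-s * x ^ 2)) := by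
        intro x
        simp only [hr', Polynomial.eval_sub, Polynomial.eval_mul, Polynomial.eval_C]
        ring
      simp_rw [key]
      rw [integral_add (hint2 _ _ _) ((hint2 _ _ _).const_mul _),
        ih (by omega) r' hr'deg, integral_const_mul, horth n (d + 1) s, if_neg (by omega)]
      ring
  intro t
  have hγne : γ n t ≠ 0 := (hγpos n t).ne'
  set g := deriv (γ n) t with hg
  -- The coefficientwise time-derivative of P n at time t
  set Pd : Polynomial ℝ := ∑ i ∈ Finset.range (n + 1),
      Polynomial.C (deriv (fun s => (P n s).coeff i) t) * Polynomial.X ^ i with hPdDef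
  have hPdcoeff : ∀ i, Pd.coeff i = deriv (fun s => (P n s).coeff i) t := by
    intro i
    rw [hPdDef, Polynomial.finset_sum_coeff]
    simp only [Polynomial.coeff_C_mul, Polynomial.coeff_X_pow, mul_ite, mul_one, mul_zero]
    rw [Finset.sum_ite_eq (Finset.range (n + 1)) i]
    by_cases hi : i < n + 1
    · simp [hi]
    · have hz : (fun s => (P n s).coeff i) = fun _ => (0 : ℝ) := by
        funext s
        exact Polynomial.coeff_eq_zero_of_natDegree_lt (by rw [hdeg]; omega)
      simp [Finset.mem_range, hi, hz]
  have hPddeg : Pd.natDegree ≤ n := by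
    refine Polynomial.natDegree_le_iff_coeff_eq_zero.mpr fun m hm => ?_
    rw [hPdcoeff]
    have hz : (fun s => (P n s).coeff m) = fun _ => (0 : ℝ) := by
      funext s
      exact Polynomial.coeff_eq_zero_of_natDegree_lt (by rw [hdeg]; omega)
    simp [hz]
  have hPnne : ∀ s, P n s ≠ 0 := by
    intro s h
    have := hlead n s
    rw [h, Polynomial.leadingCoeff_zero] at this
    exact absurd this.symm (hγpos n s).ne'
  set N := 2 * n + 1 with hN
  have hdegq : ∀ s : ℝ, (P n s * P n s).natDegree < N := by
    intro s
    rw [Polynomial.natDegree_mul (hPnne s) (hPnne s), hdeg]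
    omega
  -- derivative of the coefficients of (P n s)^2
  have hck : ∀ k, HasDerivAt (fun s => (P n s * P n s).coeff k)
      ((Pd * P n t + P n t * Pd).coeff k) t := by
    intro k
    have h1 : (fun s => (P n s * P n s).coeff k) =
        fun s => ∑ ij ∈ Finset.HasAntidiagonal.antidiagonal k, (P n s).coeff ij.1 * (P n s).coeff ij.2 := by
      funext s; rw [Polynomial.coeff_mul]
    have h2 : (Pd * P n t + P n t * Pd).coeff k =
        ∑ ij ∈ Finset.HasAntidiagonal.antidiagonal k,
          (deriv (fun s => (P n s).coeff ij.1) t * (P n t).coeff ij.2 +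
            (P n t).coeff ij.1 * deriv (fun s => (P n s).coeff ij.2) t) := by
      rw [Polynomial.coeff_add, Polynomial.coeff_mul, Polynomial.coeff_mul,
        ← Finset.sum_add_distrib]
      refine Finset.sum_congr rfl fun ij _ => ?_
      rw [hPdcoeff, hPdcoeff]
    rw [h1, h2]
    exact HasDerivAt.fun_sum fun ij _ =>
      ((hcoeff n ij.1 t).hasDerivAt.mul (hcoeff n ij.2 t).hasDerivAt)
  -- The function F s = ∑ coeffs * moments has derivative given termwise
  have hFderiv : HasDerivAt
      (fun s => ∑ k ∈ Finset.range N,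
        (P n s * P n s).coeff k * ∫ x, x ^ k * Real.exp (-s * x ^ 2) ∂μ)
      (∑ k ∈ Finset.range N,
        ((Pd * P n t + P n t * Pd).coeff k * (∫ x, x ^ k * Real.exp (-t * x ^ 2) ∂μ) +
          (P n t * P n t).coeff k * (-∫ x, x ^ (k + 2) * Real.exp (-t * x ^ 2) ∂μ))) t :=
    HasDerivAt.fun_sum fun k _ => (hck k).mul (hmom k t)
  -- F is constantly 1
  have hFone : (fun s => ∑ k ∈ Finset.range N,
      (P n s * P n s).coeff k * ∫ x, x ^ k * Real.exp (-s * x ^ 2) ∂μ) = fun _ => (1 : ℝ) := by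
    funext s
    rw [← hexp (P n s * P n s) N s (hdegq s)]
    simp only [Polynomial.eval_mul]
    rw [horth n n s, if_pos rfl]
  have hzero : (∑ k ∈ Finset.range N,
      ((Pd * P n t + P n t * Pd).coeff k * (∫ x, x ^ k * Real.exp (-t * x ^ 2) ∂μ) +
        (P n t * P n t).coeff k * (-∫ x, x ^ (k + 2) * Real.exp (-t * x ^ 2) ∂μ))) = 0 := by
    have h := hFone ▸ hFderiv
    exact h.unique (hasDerivAt_const t 1)
  -- First part of the sum: 2 * g / γ
  have hA : (∑ k ∈ Finset.range N,
      (Pd * P n t + P n t * Pd).coeff k * ∫ x, x ^ k * Real.exp (-t * x ^ 2) ∂μ) =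
      2 * (g / γ n t) := by
    have hdegS : (Pd * P n t + P n t * Pd).natDegree < N := by
      have h1 : (Pd * P n t).natDegree ≤ 2 * n := by
        refine le_trans (Polynomial.natDegree_mul_le) ?_
        rw [hdeg]; omega
      have h2 : (P n t * Pd).natDegree ≤ 2 * n := by
        refine le_trans (Polynomial.natDegree_mul_le) ?_
        rw [hdeg]; omega
      have := Polynomial.natDegree_add_le (Pd * P n t) (P n t * Pd)
      omega
    rw [← hexp _ N t hdegS]
    -- decompose Pd into (g/γ) P n t + lower degree R
    have hPdn : Pd.coeff n = g := by
      rw [hPdcoeff]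
      have : (fun s => (P n s).coeff n) = γ n := by
        funext s
        have := hlead n s
        rwa [Polynomial.leadingCoeff, hdeg] at this
      rw [this, hg]
    set R := Pd - Polynomial.C (g / γ n t) * P n t with hR
    have hRdeg : R.natDegree ≤ n - 1 := by
      refine Polynomial.natDegree_le_iff_coeff_eq_zero.mpr fun m hm => ?_
      have hm' : n ≤ m := by omega
      rcases eq_or_lt_of_le hm' with h | h
      · simp only [hR, Polynomial.coeff_sub, Polynomial.coeff_C_mul, ← h, hPdn]
        have : (P n t).coeff n = γ n t := by
          have := hlead n t
          rwa [Polynomial.leadingCoeff, hdeg] at this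
        rw [this]
        field_simp
        ring
      · have h1 : Pd.coeff m = 0 :=
          Polynomial.coeff_eq_zero_of_natDegree_lt (lt_of_le_of_lt hPddeg h)
        have h2 : (P n t).coeff m = 0 :=
          Polynomial.coeff_eq_zero_of_natDegree_lt (by rw [hdeg]; exact h)
        simp [hR, h1, h2]
    have hRint := horthlow t (n - 1) (by omega) R hRdeg
    have key : ∀ x : ℝ, (Pd * P n t + P n t * Pd).eval x * Real.exp (-t * x ^ 2) =
        2 * ((g / γ n t) * ((P n t).eval x * (P n t).eval x * Real.exp (-t * x ^ 2)) +
          (P n t).eval x * R.eval x * Real.exp (-t * x ^ 2)) := by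
      intro x
      simp only [hR, Polynomial.eval_add, Polynomial.eval_sub, Polynomial.eval_mul,
        Polynomial.eval_C]
      ring
    simp_rw [key]
    rw [integral_const_mul,
      integral_add ((hint2 (P n t) (P n t) t).const_mul _) (hint2 (P n t) R t),
      integral_const_mul, horth n n t, if_pos rfl, hRint]
    ring
  -- Second part: ∑ c_k I_{k+2} = ∫ x² p² w = a_n² + a_{n+1}²
  have hB : (∑ k ∈ Finset.range N,
      (P n t * P n t).coeff k * ∫ x, x ^ (k + 2) * Real.exp (-t * x ^ 2) ∂μ) =
      a n t ^ 2 + a (n + 1) t ^ 2 := by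
    have hstep : (∫ x, x ^ 2 * ((P n t).eval x * (P n t).eval x) * Real.exp (-t * x ^ 2) ∂μ) =
        ∑ k ∈ Finset.range N,
          (P n t * P n t).coeff k * ∫ x, x ^ (k + 2) * Real.exp (-t * x ^ 2) ∂μ := by
      have h1 : (fun x : ℝ => x ^ 2 * ((P n t).eval x * (P n t).eval x) * Real.exp (-t * x ^ 2)) =
          fun x => ∑ k ∈ Finset.range N,
            (P n t * P n t).coeff k * (x ^ (k + 2) * Real.exp (-t * x ^ 2)) := by
        funext x
        have hev : (P n t).eval x * (P n t).eval x = (P n t * P n t).eval x := by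
          rw [Polynomial.eval_mul]
        rw [hev, Polynomial.eval_eq_sum_range' (hdegq t), Finset.mul_sum, Finset.sum_mul]
        refine Finset.sum_congr rfl fun k _ => ?_
        ring
      rw [h1, integral_finset_sum _ fun k _ => (hint (k + 2) t).const_mul _]
      simp [integral_const_mul]
    rw [← hstep]
    have hxp : ∀ x : ℝ, x * (P n t).eval x =
        a (n + 1) t * (P (n + 1) t).eval x + a n t * (P (n - 1) t).eval x := by
      intro x; have := hrec n t x; linarith
    have hxx : ∀ x : ℝ, x ^ 2 * ((P n t).eval x * (P n t).eval x) * Real.exp (-t * x ^ 2) =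
        a (n + 1) t ^ 2 *
            ((P (n + 1) t).eval x * (P (n + 1) t).eval x * Real.exp (-t * x ^ 2)) +
          (2 * (a (n + 1) t * a n t) *
              ((P (n + 1) t).eval x * (P (n - 1) t).eval x * Real.exp (-t * x ^ 2)) +
            a n t ^ 2 *
              ((P (n - 1) t).eval x * (P (n - 1) t).eval x * Real.exp (-t * x ^ 2))) := by
      intro x
      have h := hxp x
      have h2 : x ^ 2 * ((P n t).eval x * (P n t).eval x) =
          (x * (P n t).eval x) * (x * (P n t).eval x) := by ring
      rw [h2, h]
      ring
    simp_rw [hxx]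
    have i1 : Integrable (fun x => a (n + 1) t ^ 2 *
        ((P (n + 1) t).eval x * (P (n + 1) t).eval x * Real.exp (-t * x ^ 2))) μ :=
      (hint2 _ _ _).const_mul _
    have i2 : Integrable (fun x => 2 * (a (n + 1) t * a n t) *
        ((P (n + 1) t).eval x * (P (n - 1) t).eval x * Real.exp (-t * x ^ 2))) μ :=
      (hint2 _ _ _).const_mul _
    have i3 : Integrable (fun x => a n t ^ 2 *
        ((P (n - 1) t).eval x * (P (n - 1) t).eval x * Real.exp (-t * x ^ 2))) μ :=
      (hint2 _ _ _).const_mul _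
    have i23 : Integrable (fun x => 2 * (a (n + 1) t * a n t) *
        ((P (n + 1) t).eval x * (P (n - 1) t).eval x * Real.exp (-t * x ^ 2)) +
          a n t ^ 2 *
            ((P (n - 1) t).eval x * (P (n - 1) t).eval x * Real.exp (-t * x ^ 2))) μ :=
      i2.add i3
    rw [integral_add i1 i23]
    rw [integral_add i2 i3,
      integral_const_mul, integral_const_mul, integral_const_mul, horth, horth, horth]
    have h1 : n + 1 ≠ n - 1 := by omega
    simp [h1]
    ring
  -- combine
  have hkey : 2 * (g / γ n t) = a n t ^ 2 + a (n + 1) t ^ 2 := by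
    have h := hzero
    rw [Finset.sum_add_distrib] at h
    simp only [mul_neg, Finset.sum_neg_distrib] at h
    rw [hA, hB] at h
    linarith
  have hdγ : HasDerivAt (γ n) g t := (hγdiff n t).hasDerivAt
  have h2 : HasDerivAt (fun s => (γ n s) ^ 2) (2 * γ n t ^ 1 * g) t := by
    simpa using hdγ.fun_pow 2
  have h3 := h2.fun_inv (pow_ne_zero 2 hγne)
  have h4 : HasDerivAt (fun s => 1 / γ n s ^ 2) (-(2 * γ n t ^ 1 * g) / (γ n t ^ 2) ^ 2) t := by
    simpa [← one_div] using h3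
  rw [h4.deriv, ← hkey]
  field_simp
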